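/- Define ℰ_n = −∫_0^∞ (2y/sinh³(y))·(∫_0^y t·sinh(t)/(t² + π²n²) dt) dy for n ≠ 0, and ℰ_0 = ∫_0^∞ (2y/sinh³(y))·(sinh(y) − ∫_0^y (sinh(t)/t) dt) dy. Then ℰ_0 > 0, ℰ_n < 0 for n ≠ 0, the sequence (ℰ_n)_{n∈ℤ} is absolutely summable, and ∑_{n∈ℤ} ℰ_n = 0. -/

import Mathlib

open Real MeasureTheory Set intervalIntegral

noncomputable section

namespace EAux

lemma sinh_lt_mul_cosh {t : ℝ} (ht : 0 < t) : Real.sinh t < t * Real.cosh t := by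
  have key : StrictMonoOn (fun x : ℝ => x * Real.cosh x - Real.sinh x) (Set.Ici 0) := by
    apply strictMonoOn_of_deriv_pos (convex_Ici 0)
    · exact ((continuous_id.mul Real.continuous_cosh).sub Real.continuous_sinh).continuousOn
    · intro x hx
      rw [interior_Ici] at hx
      have h1 : HasDerivAt (fun x : ℝ => x * Real.cosh x - Real.sinh x) (x * Real.sinh x) x := by
        have h2 : HasDerivAt (fun x : ℝ => x * Real.cosh x - Real.sinh x)
            (1 * Real.cosh x + id x * Real.sinh x - Real.cosh x) x := ((hasDerivAt_id x).mul (Real.hasDerivAt_cosh x)).sub (Real.hasDerivAt_sinh x)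
        convert h2 using 1
        simp only [id_eq]
        ring
      rw [h1.deriv]
      exact mul_pos hx (by rwa [Real.sinh_pos_iff])
  have h0 := key Set.self_mem_Ici (Set.mem_Ici.mpr ht.le) ht
  simp only [Real.sinh_zero, Real.cosh_zero, mul_one, zero_mul, sub_zero, zero_sub, neg_zero] at h0
  linarith

open Complex in
lemma coeff_eq {u : ℝ} (hu : 0 < u) (n : ℤ) :
    fourierCoeffOn (zero_lt_one' ℝ) (fun x : ℝ => Complex.cosh (2 * u * x - u)) n
      = ((u * Real.sinh u / (u ^ 2 + π ^ 2 * n ^ 2) : ℝ) : ℂ) := by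
  have hc1 : (2 * (u:ℂ) - 2 * π * I * n) ≠ 0 := by
    intro h
    have := congrArg Complex.re h
    simp [Complex.mul_re, Complex.mul_im] at this
    nlinarith [Real.pi_pos]
  have hc2 : (-(2 * (u:ℂ)) - 2 * π * I * n) ≠ 0 := by
    intro h
    have := congrArg Complex.re h
    simp [Complex.mul_re, Complex.mul_im] at this
    nlinarith [Real.pi_pos]
  have hdR : (0:ℝ) < u ^ 2 + π ^ 2 * n ^ 2 :=
    add_pos_of_pos_of_nonneg (pow_pos hu 2) (by positivity)
  have hd : ((u:ℂ) ^ 2 + (π:ℂ) ^ 2 * (n:ℂ) ^ 2) ≠ 0 := by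
    have : (((u ^ 2 + π ^ 2 * n ^ 2 : ℝ)) : ℂ) ≠ 0 := Complex.ofReal_ne_zero.mpr hdR.ne'
    simpa using this
  rw [fourierCoeffOn_eq_integral]
  have hpt : ∀ x : ℝ, (fourier (-n) ((x : ℝ) : AddCircle ((1:ℝ) - 0)) : ℂ) • Complex.cosh (2 * u * x - u)
      = (Complex.exp ((2 * u - 2 * π * I * n) * x + (-u))
         + Complex.exp ((-(2 * u) - 2 * π * I * n) * x + u)) / 2 := by
    intro x
    rw [smul_eq_mul, fourier_coe_apply]
    rw [show Complex.cosh (2 * u * x - u) =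
        (Complex.exp (2 * u * x - u) + Complex.exp (-(2 * u * x - u))) / 2 from rfl]
    rw [← mul_div_assoc, mul_add, ← Complex.exp_add, ← Complex.exp_add]
    norm_num
    ring_nf
  rw [intervalIntegral.integral_congr (fun x _ => hpt x)]
  simp_rw [Complex.exp_add]
  rw [intervalIntegral.integral_div]
  rw [intervalIntegral.integral_add
    ((by fun_prop : Continuous fun x : ℝ =>
      Complex.exp ((2 * u - 2 * π * I * n) * x) * Complex.exp (-(u:ℂ))).intervalIntegrable _ _)
    ((by fun_prop : Continuous fun x : ℝ =>
      Complex.exp ((-(2 * u) - 2 * π * I * n) * x) * Complex.exp (u:ℂ)).intervalIntegrable _ _)]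
  rw [intervalIntegral.integral_mul_const, intervalIntegral.integral_mul_const,
    integral_exp_mul_complex hc1, integral_exp_mul_complex hc2]
  norm_num
  have hc3 : (2 * (u:ℂ) + 2 * π * Complex.I * n) ≠ 0 := by
    intro h
    have := congrArg Complex.re h
    simp [Complex.mul_re, Complex.mul_im] at this
    nlinarith [Real.pi_pos]
  have he1 : Complex.exp (2 * (u:ℂ) - 2 * π * Complex.I * n) = Complex.exp (2 * (u:ℂ)) := by
    rw [sub_eq_add_neg, Complex.exp_add,
      show (-(2 * (π:ℂ) * Complex.I * n)) = ((-n : ℤ) : ℂ) * (2 * π * Complex.I) by push_cast; ring,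
      Complex.exp_int_mul_two_pi_mul_I, mul_one]
  have he2 : Complex.exp (-(2 * (u:ℂ)) - 2 * π * Complex.I * n) = Complex.exp (-(2 * (u:ℂ))) := by
    rw [sub_eq_add_neg, Complex.exp_add,
      show (-(2 * (π:ℂ) * Complex.I * n)) = ((-n : ℤ) : ℂ) * (2 * π * Complex.I) by push_cast; ring,
      Complex.exp_int_mul_two_pi_mul_I, mul_one]
  rw [he1, he2]
  have h1 : (Complex.exp (2 * (u:ℂ)) - 1) / (2 * (u:ℂ) - 2 * π * Complex.I * n)
        * Complex.exp (-(u:ℂ))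
      = (Complex.exp (u:ℂ) - Complex.exp (-(u:ℂ))) / (2 * (u:ℂ) - 2 * π * Complex.I * n) := by
    rw [div_mul_eq_mul_div]
    congr 1
    rw [sub_mul, one_mul, ← Complex.exp_add, show (2 * (u:ℂ)) + (-(u:ℂ)) = u by ring]
  have h2 : (Complex.exp (-(2 * (u:ℂ))) - 1) / (-(2 * (u:ℂ)) - 2 * π * Complex.I * n)
        * Complex.exp (u:ℂ)
      = (Complex.exp (-(u:ℂ)) - Complex.exp (u:ℂ)) / (-(2 * (u:ℂ)) - 2 * π * Complex.I * n) := by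
    rw [div_mul_eq_mul_div]
    congr 1
    rw [sub_mul, one_mul, ← Complex.exp_add, show (-(2 * (u:ℂ))) + (u:ℂ) = -u by ring]
  rw [h1, h2]
  have hswap : (Complex.exp (-(u:ℂ)) - Complex.exp (u:ℂ)) / (-(2 * (u:ℂ)) - 2 * π * Complex.I * n)
      = (Complex.exp (u:ℂ) - Complex.exp (-(u:ℂ))) / (2 * (u:ℂ) + 2 * π * Complex.I * n) := by
    rw [div_eq_div_iff hc2 hc3]
    ring
  rw [hswap]
  have hprod : (2 * (u:ℂ) - 2 * π * Complex.I * n) * (2 * (u:ℂ) + 2 * π * Complex.I * n)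
      = 4 * (u:ℂ)^2 + 4 * (π:ℂ)^2 * (n:ℂ)^2 := by
    linear_combination (-4 * (π:ℂ)^2 * (n:ℂ)^2) * Complex.I_sq
  have h44 : (4 * (u:ℂ)^2 + 4 * (π:ℂ)^2 * (n:ℂ)^2) ≠ 0 := fun h => hd (by linear_combination h / 4)
  have hfrac : (Complex.exp (u:ℂ) - Complex.exp (-(u:ℂ))) / (2 * (u:ℂ) - 2 * π * Complex.I * n)
        + (Complex.exp (u:ℂ) - Complex.exp (-(u:ℂ))) / (2 * (u:ℂ) + 2 * π * Complex.I * n)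
      = (Complex.exp (u:ℂ) - Complex.exp (-(u:ℂ))) * u / ((u:ℂ)^2 + (π:ℂ)^2 * (n:ℂ)^2) := by
    rw [div_add_div _ _ hc1 hc3, hprod, div_eq_div_iff h44 hd]
    ring
  rw [hfrac, show Complex.sinh (u:ℂ)
    = (Complex.exp (u:ℂ) - Complex.exp (-(u:ℂ))) / 2 from rfl]
  ring

lemma summable_inv_quadratic {a : ℝ} (ha : 0 < a) :
    Summable (fun n : ℤ => 1 / (a + π ^ 2 * n ^ 2)) := by
  have h1 : Summable (fun n : ℤ => (1 / π ^ 2) * (1 / (n:ℝ) ^ 2) + if n = 0 then 1/a else 0) :=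
    ((summable_one_div_int_pow.mpr one_lt_two).mul_left _).add
      (hasSum_ite_eq (0:ℤ) (1/a)).summable
  apply Summable.of_nonneg_of_le (fun n => by positivity) _ h1
  intro n
  by_cases hn : n = 0
  · subst hn; norm_num
  · have hn2 : (1:ℝ) ≤ (n:ℝ) ^ 2 := by
      have h1 : (1:ℤ) ≤ n ^ 2 := by rcases lt_or_gt_of_ne hn with h | h <;> nlinarith
      exact_mod_cast h1
    have hπ := Real.pi_pos
    simp only [hn, if_false, add_zero]
    rw [show (1 / π ^ 2) * (1 / (n:ℝ) ^ 2) = 1 / (π ^ 2 * (n:ℝ) ^ 2) by ring]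
    apply one_div_le_one_div_of_le (by nlinarith)
    nlinarith

open Complex in
lemma hasSum_coth {u : ℝ} (hu : 0 < u) :
    HasSum (fun n : ℤ => u / (u ^ 2 + π ^ 2 * n ^ 2)) (Real.cosh u / Real.sinh u) := by
  haveI : Fact (0 < (1:ℝ)) := ⟨one_pos⟩
  set f : ℝ → ℂ := fun x : ℝ => Complex.cosh (2 * u * x - u) with hf
  have hend : f 0 = f 1 := by
    show Complex.cosh (2 * u * ((0:ℝ):ℂ) - u) = Complex.cosh (2 * u * ((1:ℝ):ℂ) - u)
    push_cast
    rw [show 2 * (u:ℂ) * 0 - u = -u by ring, show 2 * (u:ℂ) * 1 - u = u by ring,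
      Complex.cosh_neg]
  have hfc : ContinuousOn f (Set.Icc 0 1) := by
    apply Continuous.continuousOn
    fun_prop
  set g : C(AddCircle 1, ℂ) :=
    ⟨AddCircle.liftIco 1 0 f, AddCircle.liftIco_zero_continuous hend hfc⟩ with hg
  have hcoeff : ∀ n : ℤ,
      fourierCoeff (⇑g) n = ((u * Real.sinh u / (u ^ 2 + π ^ 2 * n ^ 2) : ℝ) : ℂ) := by
    intro n
    rw [show ⇑g = AddCircle.liftIco 1 0 f from rfl, fourierCoeff_liftIco_eq]
    simpa only [zero_add] using coeff_eq hu n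
  have hsummable : Summable (fourierCoeff ⇑g) := by
    rw [funext hcoeff]
    rw [Complex.summable_ofReal]
    have := (summable_inv_quadratic (a := u^2) (pow_pos hu 2)).mul_left (u * Real.sinh u)
    apply this.congr
    intro n
    rw [mul_one_div]
  have step2 := has_pointwise_sum_fourier_series_of_summable hsummable (0 : AddCircle (1:ℝ))
  simp_rw [hcoeff, fourier_eval_zero, smul_eq_mul, mul_one] at step2
  have hg0 : g (0 : AddCircle (1:ℝ)) = ((Real.cosh u : ℝ) : ℂ) := by
    show AddCircle.liftIco 1 0 f (0 : AddCircle (1:ℝ)) = _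
    rw [show (0 : AddCircle (1:ℝ)) = (((0:ℝ) : ℝ) : AddCircle (1:ℝ)) from (QuotientAddGroup.mk_zero _).symm]
    rw [AddCircle.liftIco_zero_coe_apply (by norm_num : (0:ℝ) ∈ Set.Ico (0:ℝ) 1)]
    show Complex.cosh (2 * u * ((0:ℝ):ℂ) - u) = _
    push_cast
    rw [show 2 * (u:ℂ) * 0 - u = -u by ring, Complex.cosh_neg, ← Complex.ofReal_cosh]
  rw [hg0] at step2
  have step3 : HasSum (fun n : ℤ => u * Real.sinh u / (u ^ 2 + π ^ 2 * n ^ 2)) (Real.cosh u) := by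
    have := Complex.hasSum_re step2
    simpa only [Complex.ofReal_re] using this
  have hsinh : Real.sinh u ≠ 0 := by
    have : 0 < Real.sinh u := by rwa [Real.sinh_pos_iff]
    exact this.ne'
  have step4 := step3.div_const (Real.sinh u)
  have heq : (fun n : ℤ => u * Real.sinh u / (u ^ 2 + π ^ 2 * n ^ 2) / Real.sinh u)
      = fun n : ℤ => u / (u ^ 2 + π ^ 2 * n ^ 2) := by
    funext n
    have hdRn : (0:ℝ) < u ^ 2 + π ^ 2 * n ^ 2 :=
      add_pos_of_pos_of_nonneg (pow_pos hu 2) (by positivity)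
    field_simp
  rwa [heq] at step4

/-! ### The kernels -/

lemma denom_pos {n : ℤ} (hn : n ≠ 0) (t : ℝ) : 0 < t ^ 2 + π ^ 2 * (n:ℝ) ^ 2 := by
  have h0 : ((n:ℝ)) ≠ 0 := Int.cast_ne_zero.mpr hn
  have h1 : (0:ℝ) < (n:ℝ) ^ 2 := by
    rcases lt_or_gt_of_ne h0 with h | h <;> nlinarith
  have h2 := mul_pos (pow_pos Real.pi_pos 2) h1
  nlinarith [sq_nonneg t]

lemma k_cont {n : ℤ} (hn : n ≠ 0) :
    Continuous (fun t : ℝ => t * Real.sinh t / (t ^ 2 + π ^ 2 * (n:ℝ) ^ 2)) := by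
  apply Continuous.div (continuous_id.mul Real.continuous_sinh)
    (by fun_prop)
  exact fun t => (denom_pos hn t).ne'

lemma k_nonneg {n : ℤ} (hn : n ≠ 0) {t : ℝ} (ht : 0 ≤ t) :
    0 ≤ t * Real.sinh t / (t ^ 2 + π ^ 2 * (n:ℝ) ^ 2) :=
  div_nonneg (mul_nonneg ht (by rwa [Real.sinh_nonneg_iff])) (denom_pos hn t).le

lemma k_pos {n : ℤ} (hn : n ≠ 0) {t : ℝ} (ht : 0 < t) :
    0 < t * Real.sinh t / (t ^ 2 + π ^ 2 * (n:ℝ) ^ 2) :=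
  div_pos (mul_pos ht (by rwa [Real.sinh_pos_iff])) (denom_pos hn t)

lemma k_le {n : ℤ} (hn : n ≠ 0) {t y : ℝ} (ht : 0 ≤ t) (hty : t ≤ y) :
    t * Real.sinh t / (t ^ 2 + π ^ 2 * (n:ℝ) ^ 2) ≤ y * Real.sinh y / (π ^ 2 * (n:ℝ) ^ 2) := by
  have h0 : ((n:ℝ)) ≠ 0 := Int.cast_ne_zero.mpr hn
  have h1 : (0:ℝ) < (n:ℝ) ^ 2 := by
    rcases lt_or_gt_of_ne h0 with h | h <;> nlinarith
  have hd : (0:ℝ) < π ^ 2 * (n:ℝ) ^ 2 := mul_pos (pow_pos Real.pi_pos 2) h1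
  have h2 : t * Real.sinh t ≤ y * Real.sinh y := by
    apply mul_le_mul hty (Real.sinh_le_sinh.mpr hty) (by rwa [Real.sinh_nonneg_iff])
      (le_trans ht hty)
  gcongr
  · exact mul_nonneg (le_trans ht hty) (Real.sinh_nonneg_iff.mpr (le_trans ht hty))
  · nlinarith [sq_nonneg t]

/-- The primitive `K n y`. -/
lemma K_cont {n : ℤ} (hn : n ≠ 0) :
    Continuous (fun y : ℝ => ∫ t in (0:ℝ)..y, t * Real.sinh t / (t ^ 2 + π ^ 2 * (n:ℝ) ^ 2)) :=
  intervalIntegral.continuous_primitive (fun a b => ((k_cont hn).intervalIntegrable a b)) 0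

lemma K_nonneg {n : ℤ} (hn : n ≠ 0) {y : ℝ} (hy : 0 ≤ y) :
    0 ≤ ∫ t in (0:ℝ)..y, t * Real.sinh t / (t ^ 2 + π ^ 2 * (n:ℝ) ^ 2) :=
  intervalIntegral.integral_nonneg hy (fun t ht => k_nonneg hn ht.1)

lemma K_pos {n : ℤ} (hn : n ≠ 0) {y : ℝ} (hy : 0 < y) :
    0 < ∫ t in (0:ℝ)..y, t * Real.sinh t / (t ^ 2 + π ^ 2 * (n:ℝ) ^ 2) :=
  intervalIntegral.intervalIntegral_pos_of_pos_on ((k_cont hn).intervalIntegrable 0 y)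
    (fun t ht => k_pos hn ht.1) hy

lemma K_le {n : ℤ} (hn : n ≠ 0) {y : ℝ} (hy : 0 ≤ y) :
    (∫ t in (0:ℝ)..y, t * Real.sinh t / (t ^ 2 + π ^ 2 * (n:ℝ) ^ 2))
      ≤ y * (y * Real.sinh y / (π ^ 2 * (n:ℝ) ^ 2)) := by
  have h := intervalIntegral.integral_mono_on hy ((k_cont hn).intervalIntegrable 0 y)
    (_root_.intervalIntegrable_const (c := y * Real.sinh y / (π ^ 2 * (n:ℝ) ^ 2)) (μ := volume)) (fun t ht => k_le hn ht.1 ht.2)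
  rw [intervalIntegral.integral_const, smul_eq_mul, sub_zero] at h
  exact h

/-! ### sinh t / t facts -/

lemma abs_sinh_div_le_cosh (t : ℝ) : |Real.sinh t / t| ≤ Real.cosh t := by
  rcases eq_or_ne t 0 with rfl | ht
  · norm_num
  · have hat : 0 < |t| := abs_pos.mpr ht
    rw [abs_div, Real.abs_sinh, div_le_iff₀ hat]
    have h := sinh_lt_mul_cosh hat
    rw [← Real.cosh_abs]
    linarith [mul_comm |t| (Real.cosh |t|) ▸ h]

lemma sinh_div_lt_cosh {t : ℝ} (ht : 0 < t) : Real.sinh t / t < Real.cosh t := by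
  rw [div_lt_iff₀ ht]
  have h := sinh_lt_mul_cosh ht
  linarith [mul_comm t (Real.cosh t)]

lemma one_le_sinh_div {t : ℝ} (ht : 0 < t) : 1 ≤ Real.sinh t / t := by
  rw [le_div_iff₀ ht, one_mul]
  exact Real.self_le_sinh_iff.mpr ht.le

lemma intervalIntegrable_sinh_div (a b : ℝ) :
    IntervalIntegrable (fun t : ℝ => Real.sinh t / t) volume a b := by
  rw [intervalIntegrable_iff]
  have hc : IntegrableOn Real.cosh (Set.uIoc a b) volume :=
    intervalIntegrable_iff.mp (Real.continuous_cosh.intervalIntegrable a b)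
  apply Integrable.mono' hc ((Real.measurable_sinh.div measurable_id).aestronglyMeasurable)
  filter_upwards with t
  rw [Real.norm_eq_abs]
  exact abs_sinh_div_le_cosh t

/-! ### The master dominating function -/

lemma integrable_master :
    IntegrableOn (fun y : ℝ => y ^ 3 / Real.sinh y ^ 2) (Set.Ioi (0:ℝ)) := by
  have hmeas : AEStronglyMeasurable (fun y : ℝ => y ^ 3 / Real.sinh y ^ 2)
      (volume.restrict (Set.Ioi 0)) := by
    apply ContinuousOn.aestronglyMeasurable ?_ measurableSet_Ioi
    apply ContinuousOn.div (continuous_pow 3).continuousOn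
      ((Real.continuous_sinh.pow 2).continuousOn)
    intro y hy
    have : 0 < Real.sinh y := Real.sinh_pos_iff.mpr hy
    exact pow_ne_zero _ this.ne'
  apply Integrable.mono' (g := fun y => 128 * Real.exp (-(1/2) * y))
    (((exp_neg_integrableOn_Ioi 0 (by norm_num : (0:ℝ) < 1/2))).const_mul 128) hmeas
  rw [ae_restrict_iff' measurableSet_Ioi]
  filter_upwards with y hy
  have hy' : (0:ℝ) < y := hy
  have hs : 0 < Real.sinh y := Real.sinh_pos_iff.mpr hy'
  rw [Real.norm_eq_abs, abs_of_nonneg (by positivity)]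
  rcases le_total y 1 with h1 | h1
  · have h2 : y ≤ Real.sinh y := Real.self_le_sinh_iff.mpr hy'.le
    have hb1 : y ^ 3 / Real.sinh y ^ 2 ≤ y := by
      rw [div_le_iff₀ (by positivity)]
      have h3 : y ^ 2 ≤ Real.sinh y ^ 2 := by nlinarith
      nlinarith [mul_le_mul_of_nonneg_left h3 hy'.le]
    have he : Real.exp (-(1/2)) ≤ Real.exp (-(1/2) * y) := Real.exp_le_exp.mpr (by nlinarith)
    have hee : (1:ℝ)/2 ≤ Real.exp (-(1/2)) := by
      have := Real.add_one_le_exp (-(1/2 : ℝ))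
      linarith
    linarith
  · set P := Real.exp ((1/2) * y) with hP
    have hPpos : 0 < P := Real.exp_pos _
    have hQpos : 0 < Real.exp (-(1/2) * y) := Real.exp_pos _
    have hPQ : P * Real.exp (-(1/2) * y) = 1 := by
      rw [hP, ← Real.exp_add]
      norm_num
    have hPP : P * P = Real.exp y := by
      rw [hP, ← Real.exp_add]
      ring_nf
    have hE : P * P / 4 ≤ Real.sinh y := by
      rw [Real.sinh_eq, hPP]
      have e3 : (2:ℝ) ≤ Real.exp y := by
        have := Real.exp_one_gt_d9
        have h4 := Real.exp_le_exp.mpr h1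
        linarith
      have e2 : Real.exp (-y) ≤ 1/2 := by
        have e1 : Real.exp (-y) ≤ Real.exp (-1) := Real.exp_le_exp.mpr (by linarith)
        have : Real.exp (-1) * Real.exp 1 = 1 := by rw [← Real.exp_add]; norm_num
        have := Real.exp_one_gt_d9
        nlinarith [Real.exp_pos (-1 : ℝ)]
      nlinarith
    have h4 : y ≤ 2 * P := by
      have := Real.add_one_le_exp ((1/2 : ℝ) * y)
      rw [← hP] at this
      linarith
    rw [div_le_iff₀ (by positivity)]
    have hy3 : y ^ 3 ≤ 8 * P ^ 3 := by
      have := pow_le_pow_left₀ hy'.le h4 3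
      calc y ^ 3 ≤ (2 * P) ^ 3 := this
        _ = 8 * P ^ 3 := by ring
    have hsq : (P * P / 4) ^ 2 ≤ Real.sinh y ^ 2 := by nlinarith
    have hmono : 128 * Real.exp (-(1/2) * y) * ((P * P / 4) ^ 2)
        ≤ 128 * Real.exp (-(1/2) * y) * Real.sinh y ^ 2 :=
      mul_le_mul_of_nonneg_left hsq (by positivity)
    have hls : 128 * Real.exp (-(1/2) * y) * ((P * P / 4) ^ 2) = 8 * P ^ 3 := by
      have h9 : 128 * Real.exp (-(1/2) * y) * ((P * P / 4) ^ 2)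
          = 8 * P ^ 3 * (P * Real.exp (-(1/2) * y)) := by ring
      rw [h9, hPQ, mul_one]
    linarith

/-! ### the weight w and integrability of the integrands -/

lemma w_contOn : ContinuousOn (fun y : ℝ => 2 * y / Real.sinh y ^ 3) (Set.Ioi (0:ℝ)) := by
  apply ContinuousOn.div (by fun_prop) (by fun_prop)
  intro y hy
  have : 0 < Real.sinh y := Real.sinh_pos_iff.mpr hy
  positivity

lemma w_pos {y : ℝ} (hy : 0 < y) : 0 < 2 * y / Real.sinh y ^ 3 := by
  have : 0 < Real.sinh y := Real.sinh_pos_iff.mpr hy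
  positivity

lemma integrable_Gn {n : ℤ} (hn : n ≠ 0) :
    IntegrableOn (fun y : ℝ => (2 * y / Real.sinh y ^ 3) *
      ∫ t in (0:ℝ)..y, t * Real.sinh t / (t ^ 2 + π ^ 2 * (n:ℝ) ^ 2)) (Set.Ioi 0) := by
  have h0 : ((n:ℝ)) ≠ 0 := Int.cast_ne_zero.mpr hn
  have h1 : (0:ℝ) < (n:ℝ) ^ 2 := by rcases lt_or_gt_of_ne h0 with h | h <;> nlinarith
  have hd : (0:ℝ) < π ^ 2 * (n:ℝ) ^ 2 := mul_pos (pow_pos Real.pi_pos 2) h1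
  have hmeas := ((w_contOn.mul (K_cont hn).continuousOn)).aestronglyMeasurable (μ := volume) measurableSet_Ioi
  apply Integrable.mono' (g := fun y => (2 / (π ^ 2 * (n:ℝ) ^ 2)) * (y ^ 3 / Real.sinh y ^ 2))
    (integrable_master.const_mul _) hmeas
  rw [ae_restrict_iff' measurableSet_Ioi]
  filter_upwards with y hy
  have hy' : (0:ℝ) < y := hy
  have hs : 0 < Real.sinh y := Real.sinh_pos_iff.mpr hy'
  have hK := K_nonneg hn hy'.le
  have hKle := K_le hn hy'.le
  simp only [Pi.mul_apply, Pi.sub_apply]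
  rw [Real.norm_eq_abs, abs_of_nonneg (mul_nonneg (w_pos hy').le hK)]
  have step := mul_le_mul_of_nonneg_left hKle (w_pos hy').le
  have heq : (2 * y / Real.sinh y ^ 3) * (y * (y * Real.sinh y / (π ^ 2 * (n:ℝ) ^ 2)))
      = (2 / (π ^ 2 * (n:ℝ) ^ 2)) * (y ^ 3 / Real.sinh y ^ 2) := by
    field_simp
  rw [heq] at step
  exact step

lemma hsinhint {y : ℝ} (hy : 0 < y) :
    IntegrableOn (fun t : ℝ => Real.sinh t / t) (Set.Ioc 0 y) :=
  (intervalIntegrable_iff_integrableOn_Ioc_of_le hy.le).mp (intervalIntegrable_sinh_div 0 y)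

lemma integral_cosh_eq (y : ℝ) : ∫ t in (0:ℝ)..y, Real.cosh t = Real.sinh y := by
  rw [intervalIntegral.integral_eq_sub_of_hasDerivAt (fun x _ => Real.hasDerivAt_sinh x)
    (Real.continuous_cosh.intervalIntegrable 0 y)]
  simp

lemma sinh_sub_K0_eq {y : ℝ} (hy : 0 < y) :
    Real.sinh y - (∫ t in (0:ℝ)..y, Real.sinh t / t)
      = ∫ t in Set.Ioc 0 y, (Real.cosh t - Real.sinh t / t) := by
  rw [integral_sub Real.continuous_cosh.integrableOn_Ioc (hsinhint hy),
    ← integral_cosh_eq y, intervalIntegral.integral_of_le hy.le,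
    intervalIntegral.integral_of_le hy.le]

lemma sinh_sub_K0_nonneg {y : ℝ} (hy : 0 < y) :
    0 ≤ Real.sinh y - ∫ t in (0:ℝ)..y, Real.sinh t / t := by
  rw [sinh_sub_K0_eq hy]
  apply setIntegral_nonneg measurableSet_Ioc
  intro t ht
  have := le_trans (le_abs_self _) (abs_sinh_div_le_cosh t)
  linarith

lemma sinh_sub_K0_pos {y : ℝ} (hy : 0 < y) :
    0 < Real.sinh y - ∫ t in (0:ℝ)..y, Real.sinh t / t := by
  rw [sinh_sub_K0_eq hy, ← intervalIntegral.integral_of_le hy.le]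
  apply intervalIntegral.intervalIntegral_pos_of_pos_on
    ((Real.continuous_cosh.intervalIntegrable 0 y).sub (intervalIntegrable_sinh_div 0 y))
    (fun t ht => by linarith [sinh_div_lt_cosh ht.1]) hy

lemma cosh_sub_one_le {y : ℝ} (hy : 0 < y) : Real.cosh y - 1 ≤ y * Real.sinh y := by
  have h1 : ∫ t in (0:ℝ)..y, Real.sinh t = Real.cosh y - Real.cosh 0 :=
    intervalIntegral.integral_eq_sub_of_hasDerivAt (fun x _ => Real.hasDerivAt_cosh x)
      (Real.continuous_sinh.intervalIntegrable 0 y)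
  have h2 := intervalIntegral.integral_mono_on hy.le (Real.continuous_sinh.intervalIntegrable 0 y)
    (_root_.intervalIntegrable_const (c := Real.sinh y) (μ := volume))
    (fun t ht => Real.sinh_le_sinh.mpr ht.2)
  rw [h1, intervalIntegral.integral_const, smul_eq_mul, sub_zero] at h2
  simpa [Real.cosh_zero] using h2

lemma sinh_sub_K0_le {y : ℝ} (hy : 0 < y) :
    Real.sinh y - (∫ t in (0:ℝ)..y, Real.sinh t / t) ≤ y * (y * Real.sinh y) := by
  rw [sinh_sub_K0_eq hy]
  have hint : IntegrableOn (fun t : ℝ => Real.cosh t - Real.sinh t / t) (Set.Ioc 0 y) :=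
    Real.continuous_cosh.integrableOn_Ioc.sub (hsinhint hy)
  have hb : ∀ t ∈ Set.Ioc (0:ℝ) y, Real.cosh t - Real.sinh t / t ≤ Real.cosh y - 1 := by
    intro t ht
    have h4 := one_le_sinh_div ht.1
    have h5 : Real.cosh t ≤ Real.cosh y := by
      rw [Real.cosh_le_cosh, abs_of_pos ht.1, abs_of_pos hy]
      exact ht.2
    linarith
  have h6 := setIntegral_mono_on hint ((integrableOn_const_iff).mpr (Or.inr (by
      rw [Real.volume_Ioc]; exact ENNReal.ofReal_lt_top))) measurableSet_Ioc hb
  rw [setIntegral_const, Real.volume_real_Ioc_of_le hy.le, smul_eq_mul,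
    sub_zero] at h6
  have h7 := cosh_sub_one_le hy
  nlinarith [mul_le_mul_of_nonneg_left h7 hy.le]

lemma K0_cont : Continuous (fun y : ℝ => ∫ t in (0:ℝ)..y, Real.sinh t / t) :=
  intervalIntegral.continuous_primitive intervalIntegrable_sinh_div 0

lemma integrable_f0 :
    IntegrableOn (fun y : ℝ => (2 * y / Real.sinh y ^ 3) *
      (Real.sinh y - ∫ t in (0:ℝ)..y, Real.sinh t / t)) (Set.Ioi 0) := by
  have hmeas := ((w_contOn.mul
    ((Real.continuous_sinh.sub K0_cont).continuousOn))).aestronglyMeasurable (μ := volume) measurableSet_Ioi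
  apply Integrable.mono' (g := fun y => 2 * (y ^ 3 / Real.sinh y ^ 2))
    (integrable_master.const_mul 2) hmeas
  rw [ae_restrict_iff' measurableSet_Ioi]
  filter_upwards with y hy
  have hy' : (0:ℝ) < y := hy
  have hs : 0 < Real.sinh y := Real.sinh_pos_iff.mpr hy'
  simp only [Pi.mul_apply, Pi.sub_apply]
  rw [Real.norm_eq_abs, abs_of_nonneg (mul_nonneg (w_pos hy').le (sinh_sub_K0_nonneg hy'))]
  have step := mul_le_mul_of_nonneg_left (sinh_sub_K0_le hy') (w_pos hy').le
  have heq : (2 * y / Real.sinh y ^ 3) * (y * (y * Real.sinh y))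
      = 2 * (y ^ 3 / Real.sinh y ^ 2) := by
    field_simp
  rw [heq] at step
  exact step

/-! ### positivity of the integrals -/

lemma pos_aux {f : ℝ → ℝ} (hint : IntegrableOn f (Set.Ioi 0))
    (hcont : ContinuousOn f (Set.Ioi 0)) (hpos : ∀ y : ℝ, 0 < y → 0 < f y) :
    0 < ∫ y in Set.Ioi (0:ℝ), f y := by
  have h12 : 0 < ∫ y in (1:ℝ)..2, f y := by
    apply intervalIntegral.intervalIntegral_pos_of_pos_on
    · apply ContinuousOn.intervalIntegrable
      apply hcont.mono
      intro x hx
      rw [Set.uIcc_of_le one_le_two] at hx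
      exact lt_of_lt_of_le one_pos hx.1
    · exact fun x hx => hpos x (by linarith [hx.1])
    · exact one_lt_two
  rw [intervalIntegral.integral_of_le one_le_two] at h12
  have hnn : (0 : ℝ → ℝ) ≤ᵐ[volume.restrict (Set.Ioi 0)] f := by
    rw [Filter.EventuallyLE, ae_restrict_iff' measurableSet_Ioi]
    filter_upwards with y hy
    exact (hpos y hy).le
  have hsub : (Set.Ioc (1:ℝ) 2 : Set ℝ) ≤ᵐ[volume] Set.Ioi 0 :=
    HasSubset.Subset.eventuallyLE (fun x hx => lt_of_lt_of_le one_pos hx.1.le)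
  have hmono := setIntegral_mono_set hint hnn hsub
  linarith

lemma f0_contOn : ContinuousOn (fun y : ℝ => (2 * y / Real.sinh y ^ 3) *
    (Real.sinh y - ∫ t in (0:ℝ)..y, Real.sinh t / t)) (Set.Ioi 0) :=
  w_contOn.mul (Real.continuous_sinh.sub K0_cont).continuousOn

lemma E0_int_pos : 0 < ∫ y in Set.Ioi (0:ℝ), (2 * y / Real.sinh y ^ 3) *
    (Real.sinh y - ∫ t in (0:ℝ)..y, Real.sinh t / t) :=
  pos_aux integrable_f0 f0_contOn
    (fun y hy => mul_pos (w_pos hy) (sinh_sub_K0_pos hy))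

lemma Gn_int_pos {n : ℤ} (hn : n ≠ 0) : 0 < ∫ y in Set.Ioi (0:ℝ),
    (2 * y / Real.sinh y ^ 3) * ∫ t in (0:ℝ)..y, t * Real.sinh t / (t ^ 2 + π ^ 2 * (n:ℝ) ^ 2) :=
  pos_aux (integrable_Gn hn) (w_contOn.mul (K_cont hn).continuousOn)
    (fun y hy => mul_pos (w_pos hy) (K_pos hn hy))

/-! ### bounds on the integrals -/

lemma Gn_int_le {n : ℤ} (hn : n ≠ 0) :
    (∫ y in Set.Ioi (0:ℝ), (2 * y / Real.sinh y ^ 3) *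
        ∫ t in (0:ℝ)..y, t * Real.sinh t / (t ^ 2 + π ^ 2 * (n:ℝ) ^ 2))
      ≤ (2 / (π ^ 2 * (n:ℝ) ^ 2)) * ∫ y in Set.Ioi (0:ℝ), y ^ 3 / Real.sinh y ^ 2 := by
  have h0 : ((n:ℝ)) ≠ 0 := Int.cast_ne_zero.mpr hn
  have h1 : (0:ℝ) < (n:ℝ) ^ 2 := by rcases lt_or_gt_of_ne h0 with h | h <;> nlinarith
  rw [← MeasureTheory.integral_const_mul]
  apply setIntegral_mono_on (integrable_Gn hn) (integrable_master.const_mul _) measurableSet_Ioi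
  intro y hy
  have hy' : (0:ℝ) < y := hy
  have hs : 0 < Real.sinh y := Real.sinh_pos_iff.mpr hy'
  have hd : (0:ℝ) < π ^ 2 * (n:ℝ) ^ 2 := mul_pos (pow_pos Real.pi_pos 2) h1
  have step := mul_le_mul_of_nonneg_left (K_le hn hy'.le) (w_pos hy').le
  have heq : (2 * y / Real.sinh y ^ 3) * (y * (y * Real.sinh y / (π ^ 2 * (n:ℝ) ^ 2)))
      = (2 / (π ^ 2 * (n:ℝ) ^ 2)) * (y ^ 3 / Real.sinh y ^ 2) := by
    field_simp
  rw [heq] at step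
  exact step

/-! ### the pointwise kernel sums -/

lemma hasSum_kernel {t : ℝ} (ht : 0 < t) :
    HasSum (fun n : ℤ => t * Real.sinh t / (t ^ 2 + π ^ 2 * (n:ℝ) ^ 2)) (Real.cosh t) := by
  have hs : Real.sinh t ≠ 0 := (Real.sinh_pos_iff.mpr ht).ne'
  have h := (hasSum_coth ht).mul_right (Real.sinh t)
  rw [div_mul_cancel₀ _ hs] at h
  have heq : (fun n : ℤ => t / (t ^ 2 + π ^ 2 * (n:ℝ) ^ 2) * Real.sinh t)
      = fun n : ℤ => t * Real.sinh t / (t ^ 2 + π ^ 2 * (n:ℝ) ^ 2) := funext fun n => by ring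
  rwa [heq] at h

lemma hasSum_kernel' {t : ℝ} (ht : 0 < t) :
    HasSum (fun n : ℤ => if n = 0 then (0:ℝ)
        else t * Real.sinh t / (t ^ 2 + π ^ 2 * (n:ℝ) ^ 2))
      (Real.cosh t - Real.sinh t / t) := by
  have h1 := (hasSum_kernel ht).sub (hasSum_ite_eq (0:ℤ) (Real.sinh t / t))
  have heq : (fun n : ℤ => t * Real.sinh t / (t ^ 2 + π ^ 2 * (n:ℝ) ^ 2)
        - if n = 0 then Real.sinh t / t else 0)
      = fun n : ℤ => if n = 0 then (0:ℝ)
        else t * Real.sinh t / (t ^ 2 + π ^ 2 * (n:ℝ) ^ 2) := by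
    funext n
    by_cases hn : n = 0
    · simp only [hn, if_true, Int.cast_zero]
      rw [show t ^ 2 + π ^ 2 * (0:ℝ) ^ 2 = t ^ 2 by ring, sub_eq_zero]
      field_simp
    · simp [hn]
  rwa [heq] at h1

/-! ### interchange: inner integral -/

lemma hasSum_K' {y : ℝ} (hy : 0 < y) :
    HasSum (fun n : ℤ => if n = 0 then (0:ℝ)
        else ∫ t in (0:ℝ)..y, t * Real.sinh t / (t ^ 2 + π ^ 2 * (n:ℝ) ^ 2))
      (Real.sinh y - ∫ t in (0:ℝ)..y, Real.sinh t / t) := by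
  have hF_int : ∀ n : ℤ, Integrable (fun t : ℝ => if n = 0 then (0:ℝ)
      else t * Real.sinh t / (t ^ 2 + π ^ 2 * (n:ℝ) ^ 2))
      (volume.restrict (Set.Ioc 0 y)) := by
    intro n
    by_cases hn : n = 0
    · simp [hn, integrable_zero]
    · simp only [hn, if_false]
      exact (k_cont hn).integrableOn_Ioc
  have hF_sum : Summable (fun n : ℤ => ∫ t in Set.Ioc (0:ℝ) y, ‖if n = 0 then (0:ℝ)
      else t * Real.sinh t / (t ^ 2 + π ^ 2 * (n:ℝ) ^ 2)‖) := by
    apply Summable.of_nonneg_of_le (fun n => integral_nonneg (fun t => norm_nonneg _)) (fun n => ?_)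
      ((summable_one_div_int_pow.mpr one_lt_two).mul_left (y * (y * Real.sinh y / π ^ 2)))
    by_cases hn : n = 0
    · simp only [hn, if_true, norm_zero, MeasureTheory.integral_zero, Int.cast_zero]
      norm_num
    · simp only [hn, if_false]
      have hb : ∀ t ∈ Set.Ioc (0:ℝ) y, ‖t * Real.sinh t / (t ^ 2 + π ^ 2 * (n:ℝ) ^ 2)‖
          ≤ y * Real.sinh y / (π ^ 2 * (n:ℝ) ^ 2) := by
        intro t ht
        rw [Real.norm_eq_abs, abs_of_nonneg (k_nonneg hn ht.1.le)]
        exact k_le hn ht.1.le ht.2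
      have h6 := setIntegral_mono_on ((k_cont hn).integrableOn_Ioc.norm)
        ((integrableOn_const_iff).mpr (Or.inr (by
          rw [Real.volume_Ioc]; exact ENNReal.ofReal_lt_top))) measurableSet_Ioc hb
      rw [setIntegral_const, Real.volume_real_Ioc_of_le hy.le,
        smul_eq_mul, sub_zero] at h6
      exact h6.trans (le_of_eq (by ring))
  have key := MeasureTheory.hasSum_integral_of_summable_integral_norm hF_int hF_sum
  have hterm : (fun n : ℤ => ∫ t in Set.Ioc (0:ℝ) y, (if n = 0 then (0:ℝ)
      else t * Real.sinh t / (t ^ 2 + π ^ 2 * (n:ℝ) ^ 2)))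
      = fun n : ℤ => if n = 0 then (0:ℝ)
      else ∫ t in (0:ℝ)..y, t * Real.sinh t / (t ^ 2 + π ^ 2 * (n:ℝ) ^ 2) := by
    funext n
    by_cases hn : n = 0
    · simp [hn]
    · simp only [hn, if_false]
      rw [intervalIntegral.integral_of_le hy.le]
  have hval : (∫ t in Set.Ioc (0:ℝ) y, ∑' n : ℤ, (if n = 0 then (0:ℝ)
      else t * Real.sinh t / (t ^ 2 + π ^ 2 * (n:ℝ) ^ 2)))
      = Real.sinh y - ∫ t in (0:ℝ)..y, Real.sinh t / t := by
    rw [sinh_sub_K0_eq hy]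
    apply setIntegral_congr_fun measurableSet_Ioc
    intro t ht
    exact (hasSum_kernel' ht.1).tsum_eq
  rw [hterm, hval] at key
  exact key

/-! ### interchange: outer integral -/

lemma hasSum_J : HasSum (fun n : ℤ => if n = 0 then (0:ℝ)
      else ∫ y in Set.Ioi (0:ℝ), (2 * y / Real.sinh y ^ 3) *
        ∫ t in (0:ℝ)..y, t * Real.sinh t / (t ^ 2 + π ^ 2 * (n:ℝ) ^ 2))
    (∫ y in Set.Ioi (0:ℝ), (2 * y / Real.sinh y ^ 3) *
      (Real.sinh y - ∫ t in (0:ℝ)..y, Real.sinh t / t)) := by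
  have hC : 0 ≤ ∫ y in Set.Ioi (0:ℝ), y ^ 3 / Real.sinh y ^ 2 := by
    apply setIntegral_nonneg measurableSet_Ioi
    intro y hy
    exact div_nonneg (pow_nonneg (le_of_lt hy) 3) (sq_nonneg _)
  have hF_int : ∀ n : ℤ, Integrable (fun y : ℝ => if n = 0 then (0:ℝ)
      else (2 * y / Real.sinh y ^ 3) *
        ∫ t in (0:ℝ)..y, t * Real.sinh t / (t ^ 2 + π ^ 2 * (n:ℝ) ^ 2))
      (volume.restrict (Set.Ioi 0)) := by
    intro n
    by_cases hn : n = 0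
    · simp [hn, integrable_zero]
    · simp only [hn, if_false]
      exact integrable_Gn hn
  have hF_sum : Summable (fun n : ℤ => ∫ y in Set.Ioi (0:ℝ), ‖if n = 0 then (0:ℝ)
      else (2 * y / Real.sinh y ^ 3) *
        ∫ t in (0:ℝ)..y, t * Real.sinh t / (t ^ 2 + π ^ 2 * (n:ℝ) ^ 2)‖) := by
    apply Summable.of_nonneg_of_le (fun n => integral_nonneg (fun t => norm_nonneg _)) (fun n => ?_)
      ((summable_one_div_int_pow.mpr one_lt_two).mul_left
        ((2 / π ^ 2) * ∫ y in Set.Ioi (0:ℝ), y ^ 3 / Real.sinh y ^ 2))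
    by_cases hn : n = 0
    · simp only [hn, if_true, norm_zero, MeasureTheory.integral_zero, Int.cast_zero]
      norm_num
    · simp only [hn, if_false]
      have habs : ∀ y : ℝ, y ∈ Set.Ioi (0:ℝ) → ‖(2 * y / Real.sinh y ^ 3) *
          ∫ t in (0:ℝ)..y, t * Real.sinh t / (t ^ 2 + π ^ 2 * (n:ℝ) ^ 2)‖
          = (2 * y / Real.sinh y ^ 3) *
          ∫ t in (0:ℝ)..y, t * Real.sinh t / (t ^ 2 + π ^ 2 * (n:ℝ) ^ 2) := by
        intro y hy
        exact Real.norm_of_nonneg (mul_nonneg (w_pos hy).le (K_nonneg hn (le_of_lt hy)))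
      rw [setIntegral_congr_fun measurableSet_Ioi habs]
      refine (Gn_int_le hn).trans (le_of_eq (by ring))
  have key := MeasureTheory.hasSum_integral_of_summable_integral_norm hF_int hF_sum
  have hterm : (fun n : ℤ => ∫ y in Set.Ioi (0:ℝ), (if n = 0 then (0:ℝ)
      else (2 * y / Real.sinh y ^ 3) *
        ∫ t in (0:ℝ)..y, t * Real.sinh t / (t ^ 2 + π ^ 2 * (n:ℝ) ^ 2)))
      = fun n : ℤ => if n = 0 then (0:ℝ)
      else ∫ y in Set.Ioi (0:ℝ), (2 * y / Real.sinh y ^ 3) *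
        ∫ t in (0:ℝ)..y, t * Real.sinh t / (t ^ 2 + π ^ 2 * (n:ℝ) ^ 2) := by
    funext n
    by_cases hn : n = 0
    · simp [hn]
    · simp only [hn, if_false]
  have hval : (∫ y in Set.Ioi (0:ℝ), ∑' n : ℤ, (if n = 0 then (0:ℝ)
      else (2 * y / Real.sinh y ^ 3) *
        ∫ t in (0:ℝ)..y, t * Real.sinh t / (t ^ 2 + π ^ 2 * (n:ℝ) ^ 2)))
      = ∫ y in Set.Ioi (0:ℝ), (2 * y / Real.sinh y ^ 3) *
        (Real.sinh y - ∫ t in (0:ℝ)..y, Real.sinh t / t) := by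
    apply setIntegral_congr_fun measurableSet_Ioi
    intro y hy
    have h2 := (hasSum_K' hy).mul_left (2 * y / Real.sinh y ^ 3)
    simp only [mul_ite, mul_zero] at h2
    exact h2.tsum_eq
  rw [hterm, hval] at key
  exact key

end EAux

end

open Real MeasureTheory

/-- The kernel `ℰ_n` from Lemma 3.11. -/
noncomputable def E (n : ℤ) : ℝ :=
  if n = 0 then
    ∫ y in Set.Ioi (0 : ℝ),
      (2 * y / Real.sinh y ^ 3) * (Real.sinh y - ∫ t in (0 : ℝ)..y, Real.sinh t / t)
  else
    -∫ y in Set.Ioi (0 : ℝ),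
      (2 * y / Real.sinh y ^ 3) *
        ∫ t in (0 : ℝ)..y, t * Real.sinh t / (t ^ 2 + π ^ 2 * n ^ 2)

theorem E_properties :
    IntegrableOn
        (fun y => (2 * y / Real.sinh y ^ 3) *
          (Real.sinh y - ∫ t in (0 : ℝ)..y, Real.sinh t / t)) (Set.Ioi 0) ∧
      (∀ n : ℤ, n ≠ 0 →
        IntegrableOn
          (fun y => (2 * y / Real.sinh y ^ 3) *
            ∫ t in (0 : ℝ)..y, t * Real.sinh t / (t ^ 2 + π ^ 2 * n ^ 2)) (Set.Ioi 0)) ∧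
      0 < E 0 ∧ (∀ n : ℤ, n ≠ 0 → E n < 0) ∧
      Summable (fun n : ℤ => |E n|) ∧ HasSum E 0 := by
  have hE0 : E 0 = ∫ y in Set.Ioi (0 : ℝ),
      (2 * y / Real.sinh y ^ 3) * (Real.sinh y - ∫ t in (0 : ℝ)..y, Real.sinh t / t) := by
    simp only [E, if_pos rfl, if_true, eq_self_iff_true, ite_true]
  have hEn : ∀ n : ℤ, n ≠ 0 → E n = -∫ y in Set.Ioi (0 : ℝ),
      (2 * y / Real.sinh y ^ 3) *
        ∫ t in (0 : ℝ)..y, t * Real.sinh t / (t ^ 2 + π ^ 2 * (n:ℝ) ^ 2) := by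
    intro n hn
    simp only [E, if_neg hn]
  have habsE : Summable (fun n : ℤ => |E n|) := by
    have hC : 0 ≤ ∫ y in Set.Ioi (0:ℝ), y ^ 3 / Real.sinh y ^ 2 := by
      apply setIntegral_nonneg measurableSet_Ioi
      intro y hy
      exact div_nonneg (pow_nonneg (le_of_lt hy) 3) (sq_nonneg _)
    apply Summable.of_nonneg_of_le (fun n => abs_nonneg _) (fun n => ?_)
      (((summable_one_div_int_pow.mpr one_lt_two).mul_left
          (2 * (∫ y in Set.Ioi (0:ℝ), y ^ 3 / Real.sinh y ^ 2) / π ^ 2)).add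
        (hasSum_ite_eq (0:ℤ) |E 0|).summable)
    by_cases hn : n = 0
    · subst hn
      norm_num
    · rw [hEn n hn, abs_neg, abs_of_pos (EAux.Gn_int_pos hn), if_neg hn, add_zero]
      exact (EAux.Gn_int_le hn).trans (le_of_eq (by ring))
  refine ⟨EAux.integrable_f0, fun n hn => EAux.integrable_Gn hn, ?_, ?_, habsE, ?_⟩
  · rw [hE0]
    exact EAux.E0_int_pos
  · intro n hn
    rw [hEn n hn]
    exact neg_lt_zero.mpr (EAux.Gn_int_pos hn)
  · have hsum : Summable E := summable_abs_iff.mp habsE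
    have h0 := hsum.hasSum
    suffices hts : (∑' n, E n) = 0 by rwa [hts] at h0
    rw [hsum.tsum_eq_add_tsum_ite 0]
    have hneg : (fun n : ℤ => if n = 0 then (0:ℝ) else E n)
        = fun n : ℤ => -(if n = 0 then (0:ℝ)
            else ∫ y in Set.Ioi (0:ℝ), (2 * y / Real.sinh y ^ 3) *
              ∫ t in (0:ℝ)..y, t * Real.sinh t / (t ^ 2 + π ^ 2 * (n:ℝ) ^ 2)) := by
      funext n
      by_cases hn : n = 0
      · simp [hn]
      · rw [if_neg hn, if_neg hn, hEn n hn]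
    rw [hneg, tsum_neg, EAux.hasSum_J.tsum_eq, ← hE0]
    ring
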